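/- Let τ_α(x_{1:n}) = Σ_{i ∈ {1,…,N}^n} w(i) ∏_{k=1}^n ρ_{i_k}(x_k | x_{<k}) be the switch distribution over a class of N ≥ 2 models with switch rate α_t = 1/t. Then -log₂ τ_α(x_{1:n}) ≤ min over index sequences i of [(m(i)+1)(log₂ N + log₂ n) - log₂ ∏_{k=1}^n ρ_{i_k}(x_k|x_{<k})]. -/

import Mathlib

open Finset

/-- `diffAt i k` holds iff position `k` (0-based, corresponding to time `k+1`)
differs from position `k-1` in the index sequence `i`. -/
def diffAt {N n : ℕ} (i : Fin n → Fin N) (k : ℕ) : Bool :=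
  if h : k < n then
    decide (i ⟨k, h⟩ ≠ i ⟨k - 1, lt_of_le_of_lt (Nat.sub_le k 1) h⟩)
  else false

/-- The switch prior with rate `α_t = 1/t` on index sequences `i : Fin n → Fin N`
(position `k` is time `k+1`):
`w(i) = (1/N) ∏_{t=2}^{n} [(1/t)/(N-1) if switch at time t, else 1 - 1/t]`. -/
noncomputable def switchPrior (N n : ℕ) (i : Fin n → Fin N) : ℝ :=
  (1 / (N : ℝ)) *
    ∏ k ∈ Finset.Ioo 0 n,
      (if diffAt i k then (1 / ((k : ℝ) + 1)) / ((N : ℝ) - 1) else 1 - 1 / ((k : ℝ) + 1))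

/-- The number of switches in the index sequence `i`. -/
def numSwitches {N n : ℕ} (i : Fin n → Fin N) : ℕ :=
  ((Finset.Ioo 0 n).filter fun k => diffAt i k).card

/-- The switch distribution:
`τ_α(x_{1:n}) = Σ_i w(i) ∏_{k=1}^n ρ_{i_k}(x_k|x_{<k})`, where
`p j t` denotes `ρ_j(x_t|x_{<t})`. -/
noncomputable def tau (N n : ℕ) (p : Fin N → ℕ → ℝ) : ℝ :=
  ∑ i : Fin n → Fin N, switchPrior N n i * ∏ k : Fin n, p (i k) (k.1 + 1)

lemma telescope_prod (n : ℕ) (hn : 1 ≤ n) :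
    ∏ k ∈ Finset.Ioo 0 n, ((k : ℝ) / ((k : ℝ) + 1)) = 1 / n := by
  induction n, hn using Nat.le_induction with
  | base =>
    rw [show Finset.Ioo 0 1 = ∅ by rfl]
    simp
  | succ n hn ih =>
    have hins : Finset.Ioo 0 (n + 1) = insert n (Finset.Ioo 0 n) := by
      ext x
      simp only [Finset.mem_Ioo, Finset.mem_insert]
      omega
    rw [hins, Finset.prod_insert (by simp), ih]
    have hn0 : (n : ℝ) ≠ 0 := ne_of_gt (by exact_mod_cast hn)
    push_cast
    field_simp

/-- `-log₂ τ_α(x_{1:n})` is at most the minimum over all index sequences `i` of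
`(m(i)+1)(log₂ N + log₂ n) - log₂ ∏_k ρ_{i_k}(x_k|x_{<k})`. -/
theorem switch_distribution_bound (N n : ℕ) (hN : 2 ≤ N) (hn : 1 ≤ n)
    (p : Fin N → ℕ → ℝ) (hp : ∀ j t, 0 < p j t ∧ p j t ≤ 1) (i : Fin n → Fin N) :
    -Real.logb 2 (tau N n p) ≤
      ((numSwitches i : ℝ) + 1) * (Real.logb 2 N + Real.logb 2 n) -
        Real.logb 2 (∏ k : Fin n, p (i k) (k.1 + 1)) := by
  classical
  have hN1 : (1:ℝ) < N := by exact_mod_cast lt_of_lt_of_le one_lt_two hN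
  have hNpos : (0:ℝ) < N := by linarith
  have hnpos : (0:ℝ) < n := by exact_mod_cast hn
  set m := numSwitches i with hm
  have hPpos : 0 < ∏ k : Fin n, p (i k) (k.1 + 1) :=
    Finset.prod_pos fun k _ => (hp _ _).1
  -- positivity of the prior for any index sequence
  have hfac_pos : ∀ (j : Fin n → Fin N) (k : ℕ), k ∈ Finset.Ioo 0 n →
      (0:ℝ) < (if diffAt j k then (1 / ((k : ℝ) + 1)) / ((N : ℝ) - 1)
        else 1 - 1 / ((k : ℝ) + 1)) := by
    intro j k hk
    obtain ⟨hk0, hkn⟩ := Finset.mem_Ioo.mp hk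
    have hk1 : (1:ℝ) ≤ k := by exact_mod_cast hk0
    by_cases h : diffAt j k
    · rw [if_pos h]
      have : (0:ℝ) < (N:ℝ) - 1 := by linarith
      positivity
    · rw [if_neg h]
      have : 1 / ((k:ℝ) + 1) < 1 := by
        rw [div_lt_one (by linarith)]
        linarith
      linarith
  have hprior_pos : ∀ j : Fin n → Fin N, 0 < switchPrior N n j := by
    intro j
    unfold switchPrior
    exact mul_pos (by positivity) (Finset.prod_pos (hfac_pos j))
  -- lower bound on the switch prior
  have key : ∀ k ∈ Finset.Ioo 0 n,
      (if diffAt i k then (1 / ((N:ℝ) * n)) else 1) * ((k:ℝ) / ((k:ℝ) + 1)) ≤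
      (if diffAt i k then (1 / ((k : ℝ) + 1)) / ((N : ℝ) - 1)
        else 1 - 1 / ((k : ℝ) + 1)) := by
    intro k hk
    obtain ⟨hk0, hkn⟩ := Finset.mem_Ioo.mp hk
    have hk1 : (1:ℝ) ≤ k := by exact_mod_cast hk0
    have hkn' : (k:ℝ) < n := by exact_mod_cast hkn
    by_cases h : diffAt i k
    · rw [if_pos h, if_pos h]
      have e1 : (1 / ((N:ℝ) * n)) * ((k:ℝ) / ((k:ℝ) + 1))
          = (k:ℝ) / (((N:ℝ) * n) * ((k:ℝ) + 1)) := by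
        rw [div_mul_div_comm, one_mul]
      have e2 : (1 / ((k:ℝ) + 1)) / ((N:ℝ) - 1)
          = 1 / (((k:ℝ) + 1) * ((N:ℝ) - 1)) := by
        rw [div_div]
      have hN1' : (0:ℝ) < (N:ℝ) - 1 := by linarith
      rw [e1, e2, div_le_div_iff₀ (by positivity) (by positivity)]
      have hkey : (k:ℝ) * ((N:ℝ) - 1) ≤ (N:ℝ) * n := by
        nlinarith [mul_nonneg (sub_nonneg.mpr hkn'.le) (sub_nonneg.mpr hN1.le)]
      nlinarith [mul_le_mul_of_nonneg_right hkey (by positivity : (0:ℝ) ≤ (k:ℝ) + 1)]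
    · rw [if_neg h, if_neg h, one_mul]
      have : (1:ℝ) - 1 / ((k:ℝ) + 1) = (k:ℝ) / ((k:ℝ) + 1) := by
        field_simp
        ring
      rw [this]
  have hlow : (1 / ((N:ℝ) * n)) ^ (m + 1) ≤ switchPrior N n i := by
    have h1 : ∏ k ∈ Finset.Ioo 0 n,
        ((if diffAt i k then (1 / ((N:ℝ) * n)) else 1) * ((k:ℝ) / ((k:ℝ) + 1))) ≤
        ∏ k ∈ Finset.Ioo 0 n,
        (if diffAt i k then (1 / ((k : ℝ) + 1)) / ((N : ℝ) - 1)
          else 1 - 1 / ((k : ℝ) + 1)) := by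
      apply Finset.prod_le_prod _ key
      intro k hk
      obtain ⟨hk0, _⟩ := Finset.mem_Ioo.mp hk
      have hk1 : (0:ℝ) ≤ k := by positivity
      by_cases h : diffAt i k
      · rw [if_pos h]; positivity
      · rw [if_neg h, one_mul]; positivity
    have h2 : ∏ k ∈ Finset.Ioo 0 n,
        ((if diffAt i k then (1 / ((N:ℝ) * n)) else 1) * ((k:ℝ) / ((k:ℝ) + 1)))
        = (1 / ((N:ℝ) * n)) ^ m * (1 / n) := by
      rw [Finset.prod_mul_distrib, telescope_prod n hn]
      congr 1
      rw [← Finset.prod_filter, Finset.prod_const, hm]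
      rfl
    rw [h2] at h1
    unfold switchPrior
    calc (1 / ((N:ℝ) * n)) ^ (m + 1)
        = (1 / (N:ℝ)) * ((1 / ((N:ℝ) * n)) ^ m * (1 / n)) := by
          rw [pow_succ]; field_simp
      _ ≤ (1 / (N:ℝ)) * ∏ k ∈ Finset.Ioo 0 n,
            (if diffAt i k then (1 / ((k : ℝ) + 1)) / ((N : ℝ) - 1)
              else 1 - 1 / ((k : ℝ) + 1)) := by
          apply mul_le_mul_of_nonneg_left h1 (by positivity)
  have hwpos : 0 < switchPrior N n i := hprior_pos i
  have hterm : switchPrior N n i * ∏ k : Fin n, p (i k) (k.1 + 1) ≤ tau N n p := by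
    apply Finset.single_le_sum
      (f := fun j : Fin n → Fin N => switchPrior N n j * ∏ k : Fin n, p (j k) (k.1 + 1))
    · intro j _
      exact mul_nonneg (hprior_pos j).le (Finset.prod_nonneg fun k _ => (hp _ _).1.le)
    · exact Finset.mem_univ i
  have htermpos : 0 < switchPrior N n i * ∏ k : Fin n, p (i k) (k.1 + 1) :=
    mul_pos hwpos hPpos
  have h1 : Real.logb 2 (switchPrior N n i * ∏ k : Fin n, p (i k) (k.1 + 1)) ≤
      Real.logb 2 (tau N n p) :=
    Real.logb_le_logb_of_le one_lt_two htermpos hterm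
  rw [Real.logb_mul hwpos.ne' hPpos.ne'] at h1
  have h2 : Real.logb 2 ((1 / ((N:ℝ) * n)) ^ (m + 1)) ≤
      Real.logb 2 (switchPrior N n i) :=
    Real.logb_le_logb_of_le (by norm_num) (by positivity) hlow
  rw [Real.logb_pow, one_div, Real.logb_inv,
    Real.logb_mul hNpos.ne' hnpos.ne'] at h2
  push_cast at h2
  linarith
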